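/- Let λ, μ, μ₀ > 0. If there exist a, b > 0 with ab > 1, λ + μ₀ − μ/b > 0 and λ + μ − λ(b+ab) − μ₀/a > 0, then μμ₀ > λ(λ+μ₀). -/
import Mathlib


theorem stmt_17 (lam mu mu0 : ℝ) (hlam : 0 < lam) (hmu : 0 < mu) (hmu0 : 0 < mu0)
    (h : ∃ a b : ℝ, 0 < a ∧ 0 < b ∧ 1 < a * b ∧
      0 < lam + mu0 - mu / b ∧ 0 < lam + mu - lam * (b + a * b) - mu0 / a) :
    mu * mu0 > lam * (lam + mu0) := by
  obtain ⟨a, b, ha, hb, hab, hy, hx⟩ := h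
  have h2 : mu < (lam + mu0) * b := by
    have := (div_lt_iff₀ hb).mp (by linarith : mu / b < lam + mu0)
    linarith
  have h1 : mu0 < (lam + mu - lam * (b + a * b)) * a := by
    have := (div_lt_iff₀ ha).mp (by linarith : mu0 / a < lam + mu - lam * (b + a * b))
    linarith
  -- μ₀ > λ a
  have h3 : lam * a < mu0 := by
    nlinarith [mul_pos ha hb, mul_pos (mul_pos ha ha) hb]
  have h4 : lam * (b + a * b - 1) < mu - lam := by
    have : lam < mu0 / a := (lt_div_iff₀ ha).mpr (by linarith)
    linarith
  have h5 : lam * a * (lam * (b + a * b - 1)) < mu0 * (mu - lam) := by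
    apply mul_lt_mul' (le_of_lt h3) h4 ?_ hmu0
    have : (0:ℝ) < b + a * b - 1 := by nlinarith
    positivity
  nlinarith [mul_pos (mul_pos hlam hlam) (mul_pos ha (sub_pos.mpr hab)),
    mul_pos (mul_pos hlam hlam) (sub_pos.mpr hab)]
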